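/- Let K ≥ 2 be an integer and 0 ≤ n ≤ K. Then (1 − 1/K)^{K−n} · K!/(K^n (K−n)!) ≤ (1 − 1/K)^{K−1} ≤ 2/e. -/

import Mathlib

/-- For `K ≥ 2` and `0 ≤ n ≤ K`:
`(1 − 1/K)^(K−n) · K!/(K^n (K−n)!) ≤ (1 − 1/K)^(K−1) ≤ 2/e`. -/
theorem binomial_point_mass_bound (K n : ℕ) (hK : 2 ≤ K) (hn : n ≤ K) :
    (1 - 1 / (K : ℝ)) ^ (K - n) * (Nat.factorial K : ℝ) /
        ((K : ℝ) ^ n * (Nat.factorial (K - n) : ℝ))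
      ≤ (1 - 1 / (K : ℝ)) ^ (K - 1) ∧
    (1 - 1 / (K : ℝ)) ^ (K - 1) ≤ 2 / Real.exp 1 := by
  have hK2 : (2:ℝ) ≤ K := by exact_mod_cast hK
  have hKpos : (0:ℝ) < K := by linarith
  set a : ℝ := 1 - 1 / (K:ℝ) with ha
  clear_value a
  have ha_half : (1:ℝ)/2 ≤ a := by
    have : 1 / (K:ℝ) ≤ 1/2 := by
      rw [div_le_div_iff₀ hKpos (by norm_num)]; linarith
    simp only [ha]; linarith
  have ha0 : 0 ≤ a := by linarith
  have ha1 : a ≤ 1 := by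
    have : 0 < 1/(K:ℝ) := by positivity
    simp only [ha]; linarith
  constructor
  · -- first inequality
    have hfact : (Nat.factorial K : ℝ) =
        (Nat.factorial (K - n) : ℝ) * (Nat.descFactorial K n : ℝ) := by
      exact_mod_cast congrArg (Nat.cast (R := ℝ))
        (Nat.factorial_mul_descFactorial hn).symm
    have hfpos : (0:ℝ) < (Nat.factorial (K - n) : ℝ) := by
      exact_mod_cast (K - n).factorial_pos
    rcases Nat.eq_zero_or_pos n with hn0 | hn1
    · subst hn0
      simp only [Nat.sub_zero, pow_zero, one_mul, mul_div_assoc]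
      rw [div_self (by positivity), mul_one]
      exact pow_le_pow_of_le_one ha0 ha1 (Nat.sub_le K 1)
    · -- n ≥ 1
      have hdesc : Nat.descFactorial K n ≤ K * (K - 1) ^ (n - 1) := by
        obtain ⟨m, rfl⟩ : ∃ m, n = m + 1 := ⟨n - 1, by omega⟩
        obtain ⟨L, rfl⟩ : ∃ L, K = L + 1 := ⟨K - 1, by omega⟩
        rw [Nat.succ_descFactorial_succ]
        simp only [Nat.add_sub_cancel]
        exact Nat.mul_le_mul_left _ (Nat.descFactorial_le_pow L m)
      have hexp : (K - n) + (n - 1) = K - 1 := by omega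
      rw [div_le_iff₀ (by positivity)]
      have key : (Nat.descFactorial K n : ℝ) ≤ (K:ℝ) * ((K:ℝ) - 1) ^ (n - 1) := by
        have : (Nat.descFactorial K n : ℝ) ≤ ((K * (K - 1) ^ (n - 1) : ℕ) : ℝ) := by
          exact_mod_cast hdesc
        refine this.trans_eq ?_
        push_cast [Nat.cast_sub (by omega : 1 ≤ K)]
        ring
      have haK : a = ((K:ℝ) - 1) / K := by rw [ha]; field_simp
      calc a ^ (K - n) * (Nat.factorial K : ℝ)
          = a ^ (K - n) * ((Nat.factorial (K - n) : ℝ) * (Nat.descFactorial K n : ℝ)) := by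
            rw [hfact]
        _ ≤ a ^ (K - n) * ((Nat.factorial (K - n) : ℝ) * ((K:ℝ) * ((K:ℝ) - 1) ^ (n - 1))) := by
            apply mul_le_mul_of_nonneg_left _ (by positivity)
            exact mul_le_mul_of_nonneg_left key (le_of_lt hfpos)
        _ = a ^ (K - n) * (((K:ℝ) - 1) ^ (n - 1) / (K:ℝ) ^ (n - 1)) *
              ((K:ℝ) ^ n * (Nat.factorial (K - n) : ℝ)) := by
            have hn1' : n = (n - 1) + 1 := by omega
            rw [hn1']
            simp only [Nat.add_sub_cancel]
            field_simp
            ring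
        _ = a ^ (K - n) * a ^ (n - 1) * ((K:ℝ) ^ n * (Nat.factorial (K - n) : ℝ)) := by
            rw [haK, div_pow, div_pow]
        _ = a ^ (K - 1) * ((K:ℝ) ^ n * (Nat.factorial (K - n) : ℝ)) := by
            rw [← pow_add, hexp]
  · -- second inequality
    have h1 : a ≤ Real.exp (-(1/(K:ℝ))) := by
      have := Real.add_one_le_exp (-(1/(K:ℝ)))
      simp only [ha]; linarith
    have h2 : a ^ K ≤ Real.exp (-1) := by
      calc a ^ K ≤ (Real.exp (-(1/(K:ℝ)))) ^ K := pow_le_pow_left₀ ha0 h1 K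
        _ = Real.exp (-(1/(K:ℝ)) * K) := by
            rw [← Real.exp_nat_mul]; ring_nf
        _ = Real.exp (-1) := by
            congr 1; field_simp
    have hapos : 0 < a := by linarith
    have hKK : K = (K - 1) + 1 := (Nat.succ_pred_eq_of_pos (by omega)).symm
    have h3 : a ^ (K - 1) * a ≤ Real.exp (-1) := by
      rw [← pow_succ, ← hKK]; exact h2
    have h4 : a ^ (K - 1) * (1/2) ≤ a ^ (K - 1) * a :=
      mul_le_mul_of_nonneg_left ha_half (by positivity)
    have h5 : a ^ (K - 1) ≤ 2 * Real.exp (-1) := by linarith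
    calc a ^ (K - 1) ≤ 2 * Real.exp (-1) := h5
      _ = 2 / Real.exp 1 := by rw [Real.exp_neg]; ring
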